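/- Let m be a positive even integer, let β ≠ 0 and τ be real numbers, let 1 < α ≤ 2, let a < b be real numbers, and set μ_k = 2πk/(b − a). For each time level n ∈ ℕ let θ^{(n)}, θ′^{(n)} : {0,…,m−1} → ℝ be arbitrary real phase functions, and define Ψ^{n+1} from Ψ^n : {0,…,m−1} → ℂ by the Strang-split step: ψ*_j = exp(i·θ^{(n)}_j)·Ψ^n_j; ψ̂*_k = Σ_{j=0}^{m−1} ψ*_j · exp(−2πi·k·j/m); ψ**_j = (1/m)·Σ_{k=−m/2}^{m/2−1} exp(−(i/β)·|μ_k|^α·τ)·ψ̂*_k·exp(2πi·k·j/m); Ψ^{n+1}_j = exp(i·θ′^{(n)}_j)·ψ**_j. Then for every n ∈ ℕ, Σ_{j=0}^{m−1} |Ψ^n_j|² = Σ_{j=0}^{m−1} |Ψ^0_j|². -/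

import Mathlib

open Finset Complex

/-- The basic root-of-unity character `x ↦ exp(2πi·x/m)`. -/
noncomputable def Ee (m : ℕ) (x : ℤ) : ℂ := Complex.exp (2 * Real.pi * Complex.I * x / m)

lemma Ee_add (m : ℕ) (x y : ℤ) : Ee m (x + y) = Ee m x * Ee m y := by
  rw [Ee, Ee, Ee, ← Complex.exp_add]
  congr 1
  push_cast
  ring

lemma Ee_conj (m : ℕ) (x : ℤ) : (starRingEnd ℂ) (Ee m x) = Ee m (-x) := by
  rw [Ee, Ee, ← Complex.exp_conj]
  congr 1
  simp [map_div₀, map_ofNat]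

lemma Ee_pow (m : ℕ) (d : ℤ) (j : ℕ) : Ee m (d * j) = (Ee m d) ^ j := by
  rw [Ee, Ee, ← Complex.exp_nat_mul]
  congr 1
  push_cast
  ring

lemma Ee_one (m : ℕ) (hm : 0 < m) (e : ℤ) : Ee m ((m : ℤ) * e) = 1 := by
  have hm' : (m : ℂ) ≠ 0 := Nat.cast_ne_zero.mpr hm.ne'
  rw [Ee]
  have h : (2 * (Real.pi : ℂ) * Complex.I * (((m : ℤ) * e : ℤ) : ℂ) / m)
      = (e : ℂ) * (2 * Real.pi * Complex.I) := by
    push_cast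
    field_simp
  rw [h, Complex.exp_int_mul_two_pi_mul_I]

lemma Gsum (m : ℕ) (hm : 0 < m) (d : ℤ) :
    ∑ j ∈ Finset.range m, Ee m (d * j) = if (m : ℤ) ∣ d then (m : ℂ) else 0 := by
  have hm' : (m : ℂ) ≠ 0 := Nat.cast_ne_zero.mpr hm.ne'
  simp_rw [Ee_pow]
  by_cases h : (m : ℤ) ∣ d
  · obtain ⟨e, rfl⟩ := h
    have h1 : Ee m ((m : ℤ) * e) = 1 := Ee_one m hm e
    simp [h1, Dvd.intro e rfl]
  · have h2πI : (2 * (Real.pi : ℂ) * Complex.I) ≠ 0 := by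
      simp [Real.pi_ne_zero, Complex.I_ne_zero]
    have h1 : Ee m d ≠ 1 := by
      intro hE
      rw [Ee, Complex.exp_eq_one_iff] at hE
      obtain ⟨n, hn⟩ := hE
      apply h
      have key : (d : ℂ) / m = n := by
        apply mul_left_cancel₀ h2πI
        calc (2 * (Real.pi : ℂ) * Complex.I) * ((d : ℂ) / m)
            = 2 * (Real.pi : ℂ) * Complex.I * (d : ℂ) / m := by ring
          _ = n * (2 * Real.pi * Complex.I) := hn
          _ = (2 * (Real.pi : ℂ) * Complex.I) * n := by ring
      have key2 : (d : ℂ) = n * m := (div_eq_iff hm').mp key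
      have key3 : d = n * m := by exact_mod_cast key2
      exact ⟨n, by rw [key3]; ring⟩
    rw [geom_sum_eq h1]
    have hpm : (Ee m d) ^ m = 1 := by
      rw [← Ee_pow, show d * (m : ℤ) = (m : ℤ) * d by ring]
      exact Ee_one m hm d
    simp [hpm, h]

lemma IccSum (m t : ℕ) (ht : m = 2 * t) (f : ℤ → ℂ) :
    ∑ k ∈ Finset.Icc (-(m : ℤ) / 2) ((m : ℤ) / 2 - 1), f k
      = ∑ j ∈ Finset.range m, f (-(t : ℤ) + j) := by
  have h1 : (-(m : ℤ)) / 2 = -(t : ℤ) := by omega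
  have h2 : (m : ℤ) / 2 = (t : ℤ) := by omega
  rw [h1, h2]
  have himg : Finset.Icc (-(t : ℤ)) ((t : ℤ) - 1)
      = Finset.image (fun j : ℕ => -(t : ℤ) + j) (Finset.range m) := by
    ext k
    simp only [Finset.mem_Icc, Finset.mem_image, Finset.mem_range]
    constructor
    · intro hk
      exact ⟨(k + t).toNat, by omega, by omega⟩
    · rintro ⟨j, hj, rfl⟩
      omega
  rw [himg, Finset.sum_image (by intro x _ y _ h; simp only at h; omega)]

lemma GsumIcc (m : ℕ) (hm : 0 < m) (hme : Even m) (d : ℤ) :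
    ∑ k ∈ Finset.Icc (-(m : ℤ) / 2) ((m : ℤ) / 2 - 1), Ee m (d * k)
      = if (m : ℤ) ∣ d then (m : ℂ) else 0 := by
  obtain ⟨t, ht⟩ := hme
  have ht2 : m = 2 * t := by omega
  rw [IccSum m t ht2 (fun k => Ee m (d * k))]
  have hsplit : ∀ j ∈ Finset.range m, Ee m (d * (-(t : ℤ) + j))
      = Ee m (d * (-(t : ℤ))) * Ee m (d * j) := by
    intro j _
    rw [show d * (-(t : ℤ) + j) = d * (-(t : ℤ)) + d * j by ring, Ee_add]
  rw [Finset.sum_congr rfl hsplit, ← Finset.mul_sum, Gsum m hm d]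
  by_cases h : (m : ℤ) ∣ d
  · obtain ⟨e, he⟩ := h
    have hE1 : Ee m (d * (-(t : ℤ))) = 1 := by
      rw [show d * (-(t : ℤ)) = (m : ℤ) * (-(e * t)) by rw [he]; ring]
      exact Ee_one m hm _
    rw [if_pos ⟨e, he⟩, hE1, one_mul]
  · simp [h]

lemma parseval_fwd (m : ℕ) (hm : 0 < m) (hme : Even m) (g : ℕ → ℂ) (G : ℤ → ℂ)
    (hG : ∀ k, G k = ∑ j ∈ Finset.range m, g j * Ee m (-(k * j))) :
    ∑ k ∈ Finset.Icc (-(m : ℤ) / 2) ((m : ℤ) / 2 - 1), ‖G k‖ ^ 2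
      = m * ∑ j ∈ Finset.range m, ‖g j‖ ^ 2 := by
  have key : ∑ k ∈ Finset.Icc (-(m : ℤ) / 2) ((m : ℤ) / 2 - 1), G k * (starRingEnd ℂ) (G k)
      = (m : ℂ) * ∑ j ∈ Finset.range m, g j * (starRingEnd ℂ) (g j) := by
    calc ∑ k ∈ Finset.Icc (-(m : ℤ) / 2) ((m : ℤ) / 2 - 1), G k * (starRingEnd ℂ) (G k)
        = ∑ k ∈ Finset.Icc (-(m : ℤ) / 2) ((m : ℤ) / 2 - 1), ∑ j ∈ Finset.range m,
            ∑ j' ∈ Finset.range m,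
              g j * (starRingEnd ℂ) (g j') * Ee m (((j' : ℤ) - (j : ℤ)) * k) := by
          refine Finset.sum_congr rfl fun k _ => ?_
          rw [hG k, map_sum, Finset.sum_mul_sum]
          refine Finset.sum_congr rfl fun j _ => Finset.sum_congr rfl fun j' _ => ?_
          rw [map_mul, Ee_conj, neg_neg,
            show ((j' : ℤ) - (j : ℤ)) * k = -(k * (j : ℤ)) + k * (j' : ℤ) by ring, Ee_add]
          ring
      _ = ∑ j ∈ Finset.range m, ∑ j' ∈ Finset.range m,
            ∑ k ∈ Finset.Icc (-(m : ℤ) / 2) ((m : ℤ) / 2 - 1),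
              g j * (starRingEnd ℂ) (g j') * Ee m (((j' : ℤ) - (j : ℤ)) * k) := by
          rw [Finset.sum_comm]
          exact Finset.sum_congr rfl fun j _ => Finset.sum_comm
      _ = ∑ j ∈ Finset.range m, ∑ j' ∈ Finset.range m,
            g j * (starRingEnd ℂ) (g j')
              * (if ((m : ℤ)) ∣ ((j' : ℤ) - (j : ℤ)) then (m : ℂ) else 0) := by
          refine Finset.sum_congr rfl fun j _ => Finset.sum_congr rfl fun j' _ => ?_
          rw [← Finset.mul_sum, GsumIcc m hm hme]
      _ = ∑ j ∈ Finset.range m, g j * (starRingEnd ℂ) (g j) * m := by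
          refine Finset.sum_congr rfl fun j hj => ?_
          have step : ∀ j' ∈ Finset.range m,
              g j * (starRingEnd ℂ) (g j')
                * (if ((m : ℤ)) ∣ ((j' : ℤ) - (j : ℤ)) then (m : ℂ) else 0)
              = if j' = j then g j * (starRingEnd ℂ) (g j') * (m : ℂ) else 0 := by
            intro j' hj'
            simp only [Finset.mem_range] at hj hj'
            by_cases hd : j' = j
            · subst hd; simp
            · have hnd : ¬ ((m : ℤ) ∣ ((j' : ℤ) - (j : ℤ))) := by
                intro hdvd
                have h0 : ((j' : ℤ) - (j : ℤ)) = 0 :=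
                  Int.eq_zero_of_abs_lt_dvd hdvd (by rw [abs_lt]; omega)
                omega
              simp [hnd, hd]
          rw [Finset.sum_congr rfl step, Finset.sum_ite_eq']
          simp [hj]
      _ = (m : ℂ) * ∑ j ∈ Finset.range m, g j * (starRingEnd ℂ) (g j) := by
          rw [Finset.mul_sum]
          exact Finset.sum_congr rfl fun j _ => by ring
  simp_rw [Complex.sq_norm]
  apply Complex.ofReal_injective
  rw [Complex.ofReal_mul, Complex.ofReal_sum, Complex.ofReal_sum, Complex.ofReal_natCast]
  simp_rw [← Complex.mul_conj]
  exact key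

lemma parseval_inv (m : ℕ) (hm : 0 < m) (c : ℤ → ℂ) (h : ℕ → ℂ)
    (hh : ∀ j : ℕ, h j = (1 / (m : ℂ)) *
      ∑ k ∈ Finset.Icc (-(m : ℤ) / 2) ((m : ℤ) / 2 - 1), c k * Ee m (k * j)) :
    ∑ j ∈ Finset.range m, ‖h j‖ ^ 2
      = (1 / (m : ℝ)) * ∑ k ∈ Finset.Icc (-(m : ℤ) / 2) ((m : ℤ) / 2 - 1),
          ‖c k‖ ^ 2 := by
  set S := Finset.Icc (-(m : ℤ) / 2) ((m : ℤ) / 2 - 1) with hS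
  have hm' : (m : ℂ) ≠ 0 := Nat.cast_ne_zero.mpr hm.ne'
  have key : ∑ j ∈ Finset.range m, h j * (starRingEnd ℂ) (h j)
      = (1 / (m : ℂ)) * ∑ k ∈ S, c k * (starRingEnd ℂ) (c k) := by
    have hc : (starRingEnd ℂ) (1 / (m : ℂ)) = 1 / (m : ℂ) := by simp
    calc ∑ j ∈ Finset.range m, h j * (starRingEnd ℂ) (h j)
        = ∑ j ∈ Finset.range m, (1 / (m : ℂ)) * (1 / (m : ℂ)) *
            ∑ k ∈ S, ∑ k' ∈ S, c k * (starRingEnd ℂ) (c k') * Ee m ((k - k') * j) := by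
          refine Finset.sum_congr rfl fun j _ => ?_
          have expand : (∑ k ∈ S, c k * Ee m (k * j)) *
              (starRingEnd ℂ) (∑ k' ∈ S, c k' * Ee m (k' * j))
              = ∑ k ∈ S, ∑ k' ∈ S, c k * (starRingEnd ℂ) (c k') * Ee m ((k - k') * j) := by
            rw [map_sum, Finset.sum_mul_sum]
            refine Finset.sum_congr rfl fun k _ => Finset.sum_congr rfl fun k' _ => ?_
            rw [map_mul, Ee_conj,
              show (k - k') * (j : ℤ) = k * (j : ℤ) + -(k' * (j : ℤ)) by ring, Ee_add]
            ring
          rw [hh j, map_mul, hc, ← expand]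
          ring
      _ = (1 / (m : ℂ)) * (1 / (m : ℂ)) *
            ∑ k ∈ S, ∑ k' ∈ S, ∑ j ∈ Finset.range m,
              c k * (starRingEnd ℂ) (c k') * Ee m ((k - k') * j) := by
          rw [← Finset.mul_sum, Finset.sum_comm]
          congr 1
          exact Finset.sum_congr rfl fun k _ => Finset.sum_comm
      _ = (1 / (m : ℂ)) * (1 / (m : ℂ)) *
            ∑ k ∈ S, ∑ k' ∈ S, c k * (starRingEnd ℂ) (c k')
              * (if ((m : ℤ)) ∣ (k - k') then (m : ℂ) else 0) := by
          congr 1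
          refine Finset.sum_congr rfl fun k _ => Finset.sum_congr rfl fun k' _ => ?_
          rw [← Finset.mul_sum, Gsum m hm]
      _ = (1 / (m : ℂ)) * (1 / (m : ℂ)) *
            ∑ k ∈ S, c k * (starRingEnd ℂ) (c k) * (m : ℂ) := by
          congr 1
          refine Finset.sum_congr rfl fun k hk => ?_
          have step : ∀ k' ∈ S,
              c k * (starRingEnd ℂ) (c k') * (if ((m : ℤ)) ∣ (k - k') then (m : ℂ) else 0)
              = if k' = k then c k * (starRingEnd ℂ) (c k') * (m : ℂ) else 0 := by
            intro k' hk'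
            rw [hS, Finset.mem_Icc] at hk hk'
            by_cases hd : k' = k
            · subst hd; simp
            · have hnd : ¬ ((m : ℤ) ∣ (k - k')) := by
                intro hdvd
                have h0 : k - k' = 0 :=
                  Int.eq_zero_of_abs_lt_dvd hdvd (by rw [abs_lt]; omega)
                omega
              simp [hnd, hd]
          rw [Finset.sum_congr rfl step, Finset.sum_ite_eq']
          simp [hk]
      _ = (1 / (m : ℂ)) * ∑ k ∈ S, c k * (starRingEnd ℂ) (c k) := by
          rw [Finset.mul_sum, Finset.mul_sum]
          refine Finset.sum_congr rfl fun k _ => ?_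
          field_simp
  simp_rw [Complex.sq_norm]
  apply Complex.ofReal_injective
  rw [Complex.ofReal_mul, Complex.ofReal_sum, Complex.ofReal_sum, Complex.ofReal_div,
    Complex.ofReal_one, Complex.ofReal_natCast]
  simp_rw [← Complex.mul_conj]
  exact key

/-- **Theorem 6.1: unconditional stability of the TSFS scheme (case η = 0, β ≠ 0).**
At every time level `n`, one Strang-split step (nonlinear phase half-step, Fourier
multiplier step with multiplier `exp(−(i/β)·|μ_k|^α·τ)`, nonlinear phase half-step)
maps `Ψⁿ` to `Ψⁿ⁺¹`; then the discrete ℓ²-norm is conserved at every time step: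
`Σ_j |Ψⁿ_j|² = Σ_j |Ψ⁰_j|²` for all `n`. -/
theorem tsfs_scheme_unconditionally_stable
    (m : ℕ) (hm : 0 < m) (hme : Even m)
    (β τ α a b : ℝ) (hβ : β ≠ 0) (hα1 : 1 < α) (hα2 : α ≤ 2) (hab : a < b)
    (μ : ℤ → ℝ) (hμ : ∀ k : ℤ, μ k = 2 * Real.pi * (k : ℝ) / (b - a))
    (θ θ' : ℕ → ℕ → ℝ) (Ψ : ℕ → ℕ → ℂ) (ψstar ψss : ℕ → ℕ → ℂ) (ψhatstar : ℕ → ℤ → ℂ)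
    (hstar : ∀ n : ℕ, ∀ j : ℕ, ψstar n j = Complex.exp (Complex.I * (θ n j : ℂ)) * Ψ n j)
    (hhatstar : ∀ n : ℕ, ∀ k : ℤ, ψhatstar n k =
      ∑ j ∈ Finset.range m, ψstar n j *
        Complex.exp (-(2 * (Real.pi : ℂ) * Complex.I * (k : ℂ) * (j : ℂ)) / (m : ℂ)))
    (hss : ∀ n : ℕ, ∀ j : ℕ, ψss n j = (1 / (m : ℂ)) *
      ∑ k ∈ Finset.Icc (-(m : ℤ) / 2) ((m : ℤ) / 2 - 1),
        Complex.exp (-((Complex.I / (β : ℂ)) * ((|μ k| ^ α : ℝ) : ℂ) * (τ : ℂ))) *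
          ψhatstar n k *
            Complex.exp (2 * (Real.pi : ℂ) * Complex.I * (k : ℂ) * (j : ℂ) / (m : ℂ)))
    (hnew : ∀ n : ℕ, ∀ j : ℕ,
      Ψ (n + 1) j = Complex.exp (Complex.I * (θ' n j : ℂ)) * ψss n j) :
    ∀ n : ℕ, ∑ j ∈ Finset.range m, ‖Ψ n j‖ ^ 2
      = ∑ j ∈ Finset.range m, ‖Ψ 0 j‖ ^ 2 := by
  have hmR : (m : ℝ) ≠ 0 := Nat.cast_ne_zero.mpr hm.ne'
  have hβC : (β : ℂ) ≠ 0 := Complex.ofReal_ne_zero.mpr hβ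
  -- the Fourier multiplier has modulus one
  have hmult : ∀ k : ℤ,
      ‖Complex.exp (-((Complex.I / (β : ℂ)) * ((|μ k| ^ α : ℝ) : ℂ) * (τ : ℂ)))‖ = 1 := by
    intro k
    have harg : -((Complex.I / (β : ℂ)) * ((|μ k| ^ α : ℝ) : ℂ) * (τ : ℂ))
        = ((-(|μ k| ^ α * τ / β) : ℝ) : ℂ) * Complex.I := by
      push_cast
      field_simp
      try ring
      try tauto
    rw [harg, Complex.norm_exp_ofReal_mul_I]
  -- one step preserves the discrete norm
  have step : ∀ n : ℕ, ∑ j ∈ Finset.range m, ‖Ψ (n + 1) j‖ ^ 2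
      = ∑ j ∈ Finset.range m, ‖Ψ n j‖ ^ 2 := by
    intro n
    -- the phase steps preserve moduli
    have h1 : ∑ j ∈ Finset.range m, ‖Ψ (n + 1) j‖ ^ 2
        = ∑ j ∈ Finset.range m, ‖ψss n j‖ ^ 2 := by
      refine Finset.sum_congr rfl fun j _ => ?_
      rw [hnew n j, norm_mul, mul_comm Complex.I ((θ' n j : ℝ) : ℂ),
        Complex.norm_exp_ofReal_mul_I, one_mul]
    have h4 : ∑ j ∈ Finset.range m, ‖ψstar n j‖ ^ 2
        = ∑ j ∈ Finset.range m, ‖Ψ n j‖ ^ 2 := by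
      refine Finset.sum_congr rfl fun j _ => ?_
      rw [hstar n j, norm_mul, mul_comm Complex.I ((θ n j : ℝ) : ℂ),
        Complex.norm_exp_ofReal_mul_I, one_mul]
    -- inverse transform step
    have h2 : ∑ j ∈ Finset.range m, ‖ψss n j‖ ^ 2
        = (1 / (m : ℝ)) * ∑ k ∈ Finset.Icc (-(m : ℤ) / 2) ((m : ℤ) / 2 - 1),
            ‖Complex.exp (-((Complex.I / (β : ℂ)) * ((|μ k| ^ α : ℝ) : ℂ) * (τ : ℂ)))
              * ψhatstar n k‖ ^ 2 := by
      refine parseval_inv m hm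
        (fun k => Complex.exp (-((Complex.I / (β : ℂ)) * ((|μ k| ^ α : ℝ) : ℂ) * (τ : ℂ)))
          * ψhatstar n k) (ψss n) (fun j => ?_)
      rw [hss n j]
      congr 1
      refine Finset.sum_congr rfl fun k _ => ?_
      congr 1
      rw [Ee]
      congr 1
      push_cast
      ring
    -- forward transform step
    have h3 : ∑ k ∈ Finset.Icc (-(m : ℤ) / 2) ((m : ℤ) / 2 - 1),
        ‖ψhatstar n k‖ ^ 2
        = m * ∑ j ∈ Finset.range m, ‖ψstar n j‖ ^ 2 := by
      refine parseval_fwd m hm hme (ψstar n) (ψhatstar n) (fun k => ?_)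
      rw [hhatstar n k]
      refine Finset.sum_congr rfl fun j _ => ?_
      congr 1
      rw [Ee]
      congr 1
      push_cast
      ring
    have h2' : ∑ j ∈ Finset.range m, ‖ψss n j‖ ^ 2
        = (1 / (m : ℝ)) * ∑ k ∈ Finset.Icc (-(m : ℤ) / 2) ((m : ℤ) / 2 - 1),
            ‖ψhatstar n k‖ ^ 2 := by
      rw [h2]
      congr 1
      refine Finset.sum_congr rfl fun k _ => ?_
      rw [norm_mul, hmult k, one_mul]
    rw [h1, h2', h3, ← h4]
    field_simp
  intro n
  induction n with
  | zero => rfl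
  | succ n ih => rw [step n, ih]
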